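/- Let ω = e^{2πi/3}, A = (1, ω, ω)/√3 and B = (1, ω², ω²)/√3 as complex vectors. Then A ⊗ A equals B ⊗ B up to a permutation of coordinates, and A ⊗ B equals B ⊗ A up to permutation, but A ⊗ A is not equal to any permutation of B ⊗ A multiplied by a global unit-modulus scalar, and A ⊗ B is not a permuted global-phase multiple of B ⊗ B. -/

import Mathlib

open Complex

/-- Pairwise product (tensor product) of multisets of complex numbers. -/
def pProd (A B : Multiset ℂ) : Multiset ℂ :=
  (A.product B).map fun p => p.1 * p.2

lemma pProd_expand (a b c d e f : ℂ) :
    pProd {a,b,c} {d,e,f} = {a*d,a*e,a*f,b*d,b*e,b*f,c*d,c*e,c*f} := by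
  simp [pProd, Multiset.product, Multiset.insert_eq_cons]
  simp only [← Multiset.singleton_add]
  ac_rfl

theorem permutation_flexible_catalysis_example :
    let ω : ℂ := Complex.exp (2 * Real.pi * Complex.I / 3)
    let A : Multiset ℂ := {1 / (Real.sqrt 3 : ℂ), ω / (Real.sqrt 3 : ℂ), ω / (Real.sqrt 3 : ℂ)}
    let B : Multiset ℂ := {1 / (Real.sqrt 3 : ℂ), ω ^ 2 / (Real.sqrt 3 : ℂ), ω ^ 2 / (Real.sqrt 3 : ℂ)}
    pProd A A = pProd B B ∧
      pProd A B = pProd B A ∧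
      ¬ (∃ c : ℂ, ‖c‖ = 1 ∧ pProd A A = (pProd B A).map fun z => c * z) ∧
      ¬ (∃ c : ℂ, ‖c‖ = 1 ∧ pProd A B = (pProd B B).map fun z => c * z) := by
  intro ω A B
  have hA : A = {1 / (Real.sqrt 3 : ℂ), ω / (Real.sqrt 3 : ℂ), ω / (Real.sqrt 3 : ℂ)} := rfl
  have hB : B = {1 / (Real.sqrt 3 : ℂ), ω ^ 2 / (Real.sqrt 3 : ℂ), ω ^ 2 / (Real.sqrt 3 : ℂ)} := rfl
  have hπ : (Real.pi : ℂ) ≠ 0 := by exact_mod_cast Real.pi_ne_zero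
  have hω3 : ω ^ 3 = 1 := by
    show Complex.exp (2 * Real.pi * Complex.I / 3) ^ 3 = 1
    rw [← Complex.exp_nat_mul]
    rw [show ((3:ℕ):ℂ) = (3:ℂ) by norm_num,
      show (3 : ℂ) * (2 * Real.pi * Complex.I / 3) = 2 * Real.pi * Complex.I by ring,
      Complex.exp_two_pi_mul_I]
  have hω1 : ω ≠ 1 := by
    intro h
    rw [show ω = Complex.exp (2 * Real.pi * Complex.I / 3) from rfl, Complex.exp_eq_one_iff] at h
    obtain ⟨n, hn⟩ := h
    have key : (2*(Real.pi:ℂ)*Complex.I) * ((n:ℂ) - 1/3) = 0 := by linear_combination -hn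
    rcases mul_eq_zero.1 key with h0 | h0
    · exact (mul_ne_zero (mul_ne_zero two_ne_zero hπ) Complex.I_ne_zero) h0
    · have h1 : ((3*n : ℤ) : ℂ) = 1 := by push_cast; linear_combination 3*h0
      have h2 : (3*n : ℤ) = 1 := by exact_mod_cast h1
      omega
  have hsum : ω^2 + ω + 1 = 0 := by
    have hfac : (ω - 1) * (ω^2 + ω + 1) = 0 := by linear_combination hω3
    rcases mul_eq_zero.1 hfac with h0 | h0
    · exact absurd (by linear_combination h0) hω1
    · exact h0
  have hs3 : ((Real.sqrt 3 : ℝ) : ℂ) * ((Real.sqrt 3 : ℝ) : ℂ) = 3 := by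
    rw [← Complex.ofReal_mul, Real.mul_self_sqrt (by norm_num)]; norm_num
  have hdiv : ∀ u v : ℂ, u / (Real.sqrt 3 : ℂ) * (v / (Real.sqrt 3 : ℂ)) = u * v / 3 := by
    intro u v; rw [div_mul_div_comm, hs3]
  have hωω : ω * ω = ω^2 := (sq ω).symm
  have hω22 : ω^2 * ω^2 = ω := by linear_combination ω * hω3
  have hω12 : ω * ω^2 = 1 := by linear_combination hω3
  have hω21 : ω^2 * ω = 1 := by linear_combination hω3
  have eAA : pProd A A =
      ({1/3, ω/3, ω/3, ω/3, ω^2/3, ω^2/3, ω/3, ω^2/3, ω^2/3} : Multiset ℂ) := by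
    rw [hA, pProd_expand]
    simp only [hdiv, one_mul, mul_one, hωω, hω22, hω12, hω21]
  have eBB : pProd B B =
      ({1/3, ω^2/3, ω^2/3, ω^2/3, ω/3, ω/3, ω^2/3, ω/3, ω/3} : Multiset ℂ) := by
    rw [hB, pProd_expand]
    simp only [hdiv, one_mul, mul_one, hωω, hω22, hω12, hω21]
  have eAB : pProd A B =
      ({1/3, ω^2/3, ω^2/3, ω/3, 1/3, 1/3, ω/3, 1/3, 1/3} : Multiset ℂ) := by
    rw [hA, hB, pProd_expand]
    simp only [hdiv, one_mul, mul_one, hωω, hω22, hω12, hω21]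
  have eBA : pProd B A =
      ({1/3, ω/3, ω/3, ω^2/3, 1/3, 1/3, ω^2/3, 1/3, 1/3} : Multiset ℂ) := by
    rw [hA, hB, pProd_expand]
    simp only [hdiv, one_mul, mul_one, hωω, hω22, hω12, hω21]
  refine ⟨?_, ?_, ?_, ?_⟩
  · rw [eAA, eBB]
    simp only [Multiset.insert_eq_cons, ← Multiset.singleton_add]
    ac_rfl
  · rw [eAB, eBA]
    simp only [Multiset.insert_eq_cons, ← Multiset.singleton_add]
    ac_rfl
  · rintro ⟨c, -, h⟩
    rw [eAA, eBA] at h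
    have h1 := congrArg Multiset.sum h
    have h2 := congrArg (fun M : Multiset ℂ => (M.map fun z => z * z).sum) h
    simp only [Multiset.insert_eq_cons, Multiset.map_cons, Multiset.map_singleton,
      Multiset.sum_cons, Multiset.sum_singleton] at h1 h2
    have hc : c = -1 := by linear_combination (-1)*h1 + ((4-2*c)/3)*hsum
    have hc2 : c^2 = -1 := by
      linear_combination (-3)*h2 + ((4-2*c^2)/3)*hsum + ((4-2*c^2)/3)*ω*hω3
    rw [hc] at hc2; norm_num at hc2
  · rintro ⟨c, -, h⟩
    rw [eAB, eBB] at h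
    have h1 := congrArg Multiset.sum h
    have h2 := congrArg (fun M : Multiset ℂ => (M.map fun z => z * z).sum) h
    simp only [Multiset.insert_eq_cons, Multiset.map_cons, Multiset.map_singleton,
      Multiset.sum_cons, Multiset.sum_singleton] at h1 h2
    have hc : c = -1 := by linear_combination h1 + ((4*c-2)/3)*hsum
    have hc2 : c^2 = -1 := by
      linear_combination 3*h2 + ((4*c^2-2)/3)*hsum + ((4*c^2-2)/3)*ω*hω3
    rw [hc] at hc2; norm_num at hc2
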